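/- Let {X; w₁,…,w_N} be a system of contractions on a complete partial metric space (X,p) with common contraction factor s < 1. Then W : H_p(X) → H_p(X), W(B) = ⋃_{j=1}^N wⱼ(B), satisfies h_p(W(A), W(B)) ≤ s·h_p(A,B) for all nonempty compact A,B, i.e. W is an s-contraction on the hyperspace with the Hausdorff partial metric. -/
import Mathlib


open Filter Topology Set ENNReal

/-- A partial metric on `X` (Matthews' axioms P1–P4). -/
structure PartialMetricOn (X : Type*) where
  p : X → X → ℝ
  nonneg_self : ∀ x, 0 ≤ p x x
  self_le : ∀ x y, p x x ≤ p x y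
  eq_of_indist : ∀ x y, p x x = p x y → p x y = p y y → x = y
  symm : ∀ x y, p x y = p y x
  triangle : ∀ x y z, p x z ≤ p x y + p y z - p y y

variable {X : Type*}

/-- A sequence is Cauchy if `p (a m) (a n)` converges as `m, n → ∞`. -/
def PartialMetricOn.IsCauchySeq (P : PartialMetricOn X) (a : ℕ → X) : Prop :=
  ∃ l : ℝ, Tendsto (fun mn : ℕ × ℕ => P.p (a mn.1) (a mn.2)) atTop (nhds l)

/-- Convergence in a partial metric space: `lim p (a n) x = p x x`. -/
def PartialMetricOn.ConvergesTo (P : PartialMetricOn X) (a : ℕ → X) (x : X) : Prop :=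
  Tendsto (fun n => P.p (a n) x) atTop (nhds (P.p x x))

/-- Completeness: every Cauchy sequence converges, with `lim p (a m) (a n) = p x x`. -/
def PartialMetricOn.Complete (P : PartialMetricOn X) : Prop :=
  ∀ a : ℕ → X, P.IsCauchySeq a → ∃ x, P.ConvergesTo a x ∧
    Tendsto (fun mn : ℕ × ℕ => P.p (a mn.1) (a mn.2)) atTop (nhds (P.p x x))

/-- The topology induced by a partial metric, generated by the open balls
`{y | p x y < p x x + ε}`. -/
def PartialMetricOn.topology (P : PartialMetricOn X) : TopologicalSpace X :=
  TopologicalSpace.generateFrom {s | ∃ x ε, 0 < ε ∧ s = {y | P.p x y < P.p x x + ε}}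

/-- The Lipschitz constant `Lip_p f = sup_{x ≠ y} p (f x) (f y) / p x y ∈ [0,∞]`. -/
noncomputable def PartialMetricOn.lip (P : PartialMetricOn X) (f : X → X) : ℝ≥0∞ :=
  ⨆ q : {q : X × X // q.1 ≠ q.2}, ENNReal.ofReal (P.p (f q.1.1) (f q.1.2) / P.p q.1.1 q.1.2)

/-- The diameter `diam A = sup_{x,y ∈ A} p x y ∈ [0,∞]`. -/
noncomputable def PartialMetricOn.diam (P : PartialMetricOn X) (A : Set X) : ℝ≥0∞ :=
  ⨆ x ∈ A, ⨆ y ∈ A, ENNReal.ofReal (P.p x y)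

/-- `ρ_p(A,B) = sup_{x ∈ A} inf_{y ∈ B} p x y`. -/
noncomputable def PartialMetricOn.rho (P : PartialMetricOn X) (A B : Set X) : ℝ :=
  sSup ((fun x => sInf ((fun y => P.p x y) '' B)) '' A)

/-- The Hausdorff partial metric `h_p(A,B) = max {ρ_p(A,B), ρ_p(B,A)}`. -/
noncomputable def PartialMetricOn.hp (P : PartialMetricOn X) (A B : Set X) : ℝ :=
  max (P.rho A B) (P.rho B A)

/-- `wordComp f w m = f_{w 0} ∘⋯-style composition: the map `f_{[w]_m}`. -/
def wordComp {ι : Type*} (f : ι → X → X) (w : ℕ → ι) : ℕ → X → X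
  | 0 => id
  | (m+1) => (wordComp f w m) ∘ (f (w m))


lemma PartialMetricOn.p_nonneg (P : PartialMetricOn X) (x y : X) : 0 ≤ P.p x y :=
  le_trans (P.nonneg_self x) (P.self_le x y)

lemma PartialMetricOn.bdd_of_compact (P : PartialMetricOn X) {A : Set X}
    (hAc : @IsCompact X P.topology A) (y0 : X) : ∃ M, ∀ x ∈ A, P.p x y0 ≤ M := by
  letI := P.topology
  obtain ⟨t, ht⟩ := hAc.elim_finite_subcover (fun a : X => {y | P.p a y < P.p a a + 1})
    (fun a => TopologicalSpace.isOpen_generateFrom_of_mem ⟨a, 1, one_pos, rfl⟩)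
    (fun x _ => Set.mem_iUnion.2 ⟨x, show P.p x x < P.p x x + 1 from lt_add_one _⟩)
  refine ⟨∑ a ∈ t, (1 + P.p a y0), fun x hx => ?_⟩
  obtain ⟨a, ha, hxa⟩ := Set.mem_iUnion₂.1 (ht hx)
  have h1 : P.p x y0 ≤ P.p x a + P.p a y0 - P.p a a := P.triangle x a y0
  have h2 : P.p x a < P.p a a + 1 := by rw [P.symm]; exact hxa
  have h3 : 1 + P.p a y0 ≤ ∑ a ∈ t, (1 + P.p a y0) :=
    Finset.single_le_sum (fun i _ => add_nonneg zero_le_one (P.p_nonneg i y0)) ha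
  linarith

lemma PartialMetricOn.rho_nonneg (P : PartialMetricOn X) (A B : Set X) :
    0 ≤ P.rho A B := by
  apply Real.sSup_nonneg
  rintro z ⟨x, _, rfl⟩
  exact Real.sInf_nonneg (by rintro z ⟨y, _, rfl⟩; exact P.p_nonneg x y)

lemma PartialMetricOn.rho_contract (P : PartialMetricOn X) {N : ℕ} (w : Fin N → X → X)
    (s : ℝ) (hs0 : 0 ≤ s) (hw : ∀ j x y, P.p (w j x) (w j y) ≤ s * P.p x y)
    {A B : Set X} (hAc : @IsCompact X P.topology A) (hB : B.Nonempty) :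
    P.rho (⋃ j, w j '' A) (⋃ j, w j '' B) ≤ s * P.rho A B := by
  obtain ⟨b0, hb0⟩ := hB
  obtain ⟨M, hM⟩ := P.bdd_of_compact hAc b0
  have hbddB : ∀ x : X, BddBelow ((fun y => P.p x y) '' B) :=
    fun x => ⟨0, by rintro z ⟨y, _, rfl⟩; exact P.p_nonneg x y⟩
  have hbddWB : ∀ x : X, BddBelow ((fun y => P.p x y) '' ⋃ j, w j '' B) :=
    fun x => ⟨0, by rintro z ⟨y, _, rfl⟩; exact P.p_nonneg x y⟩
  have hbddA : BddAbove ((fun x => sInf ((fun y => P.p x y) '' B)) '' A) := by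
    refine ⟨M, ?_⟩
    rintro z ⟨x, hx, rfl⟩
    exact le_trans (csInf_le (hbddB x) ⟨b0, hb0, rfl⟩) (hM x hx)
  refine Real.sSup_le ?_ (mul_nonneg hs0 (P.rho_nonneg A B))
  rintro z ⟨x, hx, rfl⟩
  obtain ⟨j, hj⟩ := Set.mem_iUnion.1 hx
  obtain ⟨a, ha, rfl⟩ := hj
  have key : ∀ b ∈ B, sInf ((fun y => P.p (w j a) y) '' ⋃ j, w j '' B) ≤ s * P.p a b := by
    intro b hb
    refine le_trans (csInf_le (hbddWB _) ⟨w j b, Set.mem_iUnion.2 ⟨j, ⟨b, hb, rfl⟩⟩, rfl⟩)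
      (hw j a b)
  have step : sInf ((fun y => P.p (w j a) y) '' ⋃ j, w j '' B)
      ≤ s * sInf ((fun y => P.p a y) '' B) := by
    rcases eq_or_lt_of_le hs0 with hs | hs
    · subst hs
      have h2 := key b0 hb0
      simp only [zero_mul] at h2 ⊢
      exact h2
    · rw [← div_le_iff₀' hs]
      refine le_csInf (Set.Nonempty.image _ ⟨b0, hb0⟩) ?_
      rintro z ⟨b, hb, rfl⟩
      rw [div_le_iff₀' hs]
      exact key b hb
  refine le_trans step (mul_le_mul_of_nonneg_left ?_ hs0)
  exact le_csSup hbddA ⟨a, ha, rfl⟩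

theorem stmt19 {N : ℕ} (P : PartialMetricOn X) (hC : P.Complete)
    (w : Fin N → X → X) (s : ℝ) (hs0 : 0 ≤ s) (hs1 : s < 1)
    (hw : ∀ j x y, P.p (w j x) (w j y) ≤ s * P.p x y)
    (A B : Set X) (hA : A.Nonempty) (hAc : @IsCompact X P.topology A)
    (hB : B.Nonempty) (hBc : @IsCompact X P.topology B) :
    P.hp (⋃ j, w j '' A) (⋃ j, w j '' B) ≤ s * P.hp A B := by
  have h1 := P.rho_contract w s hs0 hw hAc hB
  have h2 := P.rho_contract w s hs0 hw hBc hA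
  unfold PartialMetricOn.hp
  rw [mul_max_of_nonneg _ _ hs0]
  exact max_le_max h1 h2
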